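/- Let q be a prime power and m, r, μ, ℓ positive integers. Let a = (a_1, …, a_ℓ) be a vector of nonzero elements of F_{q^m} that are pairwise non-conjugate with respect to σ(x) = x^q. Let β = (β_1, …, β_{μr}) ∈ F_{q^m}^{μr}, take β_1 = β_2 = ⋯ = β_ℓ = β as the blocks of evaluation points, set g = ℓμ, N = gr, and let 1 ≤ h ≤ N. For i = 1,…,μ define the F_q-linear subspace H_i = span_{F_q}{β_{(i−1)r+1}, β_{(i−1)r+2}, …, β_{ir}} ⊆ F_{q^m}. Then the extended Moore matrix M_h(a, β) ∈ F_{q^m}^{h×N} is an MSRD matrix for the length partition (g, r) over F_q if and only if the following two conditions hold: (1) dim_{F_q}(H_i) = r for all i = 1,…,μ (i.e., β_{(i−1)r+1},…,β_{ir} are linearly independent over F_q); and (2) H_i ∩ (Σ_{j∈Γ} H_j) = {0} for every i = 1,…,μ and every subset Γ ⊆ {1,…,μ} with i ∉ Γ and |Γ| ≤ min{h, μ} − 1. -/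

import Mathlib

/-- An `h × N` matrix over a field is MDS if every `h × h` submatrix formed by `h`
distinct columns is invertible. -/
def IsMDSMatrix {K : Type} [Field K] {h : ℕ} {ι : Type} [Fintype ι] [DecidableEq ι]
    (M : Matrix (Fin h) ι K) : Prop :=
  ∀ f : Fin h → ι, Function.Injective f → IsUnit (M.submatrix id f).det

/-- The block-diagonal matrix over `K` built from `r × r` matrices over the subfield
`Fq`, one for each block index in `ι`. -/
def BlockDiag (Fq K : Type) [Field Fq] [Field K] [Algebra Fq K]
    {ι : Type} [DecidableEq ι] {r : ℕ}
    (A : ι → Matrix (Fin r) (Fin r) Fq) : Matrix (ι × Fin r) (ι × Fin r) K :=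
  fun x y => if x.1 = y.1 then algebraMap Fq K (A x.1 x.2 y.2) else 0

/-- A matrix with columns partitioned into blocks of size `r` is an MSRD matrix for the
length partition `(g, r)` over `Fq` if it stays MDS after right multiplication by any
invertible block-diagonal matrix over `Fq`. -/
def IsMSRDMatrix (Fq : Type) {K : Type} [Field Fq] [Field K] [Algebra Fq K]
    {h r : ℕ} {ι : Type} [Fintype ι] [DecidableEq ι]
    (M : Matrix (Fin h) (ι × Fin r) K) : Prop :=
  ∀ A : ι → Matrix (Fin r) (Fin r) Fq, (∀ b, IsUnit (A b).det) →
    IsMDSMatrix (M * BlockDiag Fq K A)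

section Setup
variable {p n q : ℕ} (hp : p.Prime) (hn : 0 < n) (hpq : p ^ n = q)
variable {K : Type} [Field K] [Fintype K] {m : ℕ} (hm : 0 < m) (hcardK : Fintype.card K = q ^ m)

include hp hn hpq hm hcardK in
lemma charK : CharP K p := by
  have h0 : (ringChar K).Prime := CharP.char_is_prime K _
  obtain ⟨k, hk⟩ := FiniteField.card K (ringChar K)
  have : p ^ (n * m) = ringChar K ^ (k : ℕ) := by
    rw [← hk.2, hcardK, ← hpq, pow_mul]
  have hdvd : p ∣ ringChar K ^ (k : ℕ) := by
    rw [← this]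
    exact dvd_pow_self p (by positivity)
  have := (Nat.Prime.dvd_of_dvd_pow hp hdvd)
  have := (Nat.prime_dvd_prime_iff_eq hp h0).mp this
  rw [this]
  exact ringChar.charP K

include hp hn hpq hm hcardK in
lemma frobK : ∀ u : ℕ, ∃ φ : K →+* K, ∀ x, φ x = x ^ q ^ u := by
  haveI := charK hp hn hpq hm hcardK
  haveI : ExpChar K p := ExpChar.prime hp
  intro u
  exact ⟨iterateFrobenius K p (n*u), fun x => by
    rw [iterateFrobenius_def, pow_mul, hpq]⟩

variable {Fq : Type} [Field Fq] [Fintype Fq] [Algebra Fq K] (hcardFq : Fintype.card Fq = q)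

include hcardFq in
lemma epsK : ∀ ε : Fq, (algebraMap Fq K ε) ^ q = algebraMap Fq K ε := by
  intro ε
  rw [← map_pow, ← hcardFq, FiniteField.pow_card]

include hp hn hpq hcardFq in
lemma rootK : ∀ x : K, x ^ q = x → ∃ ε : Fq, algebraMap Fq K ε = x := by
  intro x hx
  classical
  have hq2 : 2 ≤ q := by
    rw [← hpq]; calc 2 ≤ p := hp.two_le
    _ ≤ p ^ n := Nat.le_self_pow hn.ne' p
  set P : Polynomial K := Polynomial.X ^ q - Polynomial.X with hP
  have hdeg : P.natDegree = q := by
    rw [hP]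
    compute_degree!
    · have h1 : ¬ (1 = q) := by omega
      simp [h1]
    · omega
  have hP0 : P ≠ 0 := fun h => by simp [h] at hdeg; omega
  have hroots : ∀ y : K, y ^ q = y → y ∈ P.roots.toFinset := by
    intro y hy
    simp only [Multiset.mem_toFinset, Polynomial.mem_roots hP0, Polynomial.IsRoot.def, hP]
    simp [hy]
    exact hP0
  have hcardroots : P.roots.toFinset.card ≤ q := by
    calc P.roots.toFinset.card ≤ Multiset.card P.roots := Multiset.toFinset_card_le _
    _ ≤ P.natDegree := Polynomial.card_roots' P
    _ = q := hdeg
  set img : Finset K := Finset.univ.image (algebraMap Fq K) with himg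
  have himgsub : img ⊆ P.roots.toFinset := by
    intro y hy
    simp only [himg, Finset.mem_image] at hy
    obtain ⟨ε, _, rfl⟩ := hy
    exact hroots _ (epsK hcardFq ε)
  have hcardimg : img.card = q := by
    rw [himg, Finset.card_image_of_injective _ (algebraMap Fq K).injective,
      Finset.card_univ, hcardFq]
  have : img = P.roots.toFinset :=
    Finset.eq_of_subset_of_card_le himgsub (by omega)
  have hxmem : x ∈ img := by rw [this]; exact hroots x hx
  simp only [himg, Finset.mem_image] at hxmem
  obtain ⟨ε, _, hε⟩ := hxmem
  exact ⟨ε, hε⟩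

end Setup

section NatExp
variable {q : ℕ} (hq2 : 2 ≤ q)

/-- exponent of the truncated norm -/
def eexp (q u : ℕ) : ℕ := (q ^ u - 1) / (q - 1)

include hq2 in
lemma geom_nat : ∀ u : ℕ, (q - 1) * ∑ k ∈ Finset.range u, q ^ k = q ^ u - 1 := by
  intro u
  induction u with
  | zero => simp
  | succ u ih =>
    have h1 : 1 ≤ q ^ u := Nat.one_le_pow _ _ (by omega)
    have h2 : 1 ≤ q ^ (u + 1) := Nat.one_le_pow _ _ (by omega)
    rw [Finset.sum_range_succ, Nat.mul_add, ih]
    zify [h1, h2, show 1 ≤ q by omega]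
    ring

include hq2 in
lemma eexp_eq_sum (u : ℕ) : eexp q u = ∑ k ∈ Finset.range u, q ^ k := by
  rw [eexp, ← geom_nat hq2 u, Nat.mul_div_cancel_left _ (by omega)]

include hq2 in
lemma eexp_zero : eexp q 0 = 0 := by rw [eexp_eq_sum hq2]; simp

include hq2 in
lemma eexp_succ (u : ℕ) : eexp q (u + 1) = q * eexp q u + 1 := by
  rw [eexp_eq_sum hq2, eexp_eq_sum hq2, Finset.sum_range_succ']
  simp only [pow_succ', ← Finset.mul_sum, pow_zero]

include hq2 in
lemma eexp_succ' (u : ℕ) : eexp q (u + 1) = eexp q u + q ^ u := by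
  rw [eexp_eq_sum hq2, eexp_eq_sum hq2, Finset.sum_range_succ]

end NatExp

/-- the entries of the Moore matrix : `moo q a b u = b^(q^u) * N_u(a)` -/
def moo (q : ℕ) {K : Type} [Field K] (a b : K) (u : ℕ) : K :=
  b ^ q ^ u * a ^ eexp q u

section MooLemmas
variable {q : ℕ} (hq2 : 2 ≤ q) {K : Type} [Field K]

include hq2 in
lemma moo_zero (a b : K) : moo q a b 0 = b := by
  simp [moo, eexp_zero hq2]

include hq2 in
lemma moo_succ (a b : K) (u : ℕ) : moo q a b (u + 1) = moo q a (b ^ q * a) u := by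
  rw [moo, moo, eexp_succ' hq2, mul_pow, ← pow_mul, ← pow_succ', pow_add]
  ring

include hq2 in
lemma moo_q (a b : K) (u : ℕ) : (moo q a b u) ^ q * a = moo q a b (u + 1) := by
  rw [moo, moo, eexp_succ hq2, mul_pow, ← pow_mul, ← pow_mul, ← pow_succ,
    mul_comm (eexp q u) q, pow_add, pow_one]
  ring

lemma moo_b_zero (a : K) (u : ℕ) (hq0 : 0 < q) : moo q a 0 u = 0 := by
  rw [moo, zero_pow (by positivity), zero_mul]

variable (hfrob : ∀ u : ℕ, ∃ φ : K →+* K, ∀ x, φ x = x ^ q ^ u)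

include hfrob in
lemma moo_sum {C : Type} (S : Finset C) (f : C → K) (a : K) (u : ℕ) :
    moo q a (∑ c ∈ S, f c) u = ∑ c ∈ S, moo q a (f c) u := by
  obtain ⟨φ, hφ⟩ := hfrob u
  simp only [moo, ← hφ, map_sum, Finset.sum_mul]

include hfrob in
lemma moo_neg (a b : K) (u : ℕ) : moo q a (-b) u = -moo q a b u := by
  obtain ⟨φ, hφ⟩ := hfrob u
  simp only [moo, ← hφ, map_neg, neg_mul]

variable {Fq : Type} [Field Fq] [Algebra Fq K]
  (heps : ∀ ε : Fq, (algebraMap Fq K ε) ^ q = algebraMap Fq K ε)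

include heps in
lemma eps_pow_qpow (ε : Fq) (u : ℕ) :
    (algebraMap Fq K ε) ^ q ^ u = algebraMap Fq K ε := by
  induction u with
  | zero => simp
  | succ u ih => rw [pow_succ, pow_mul, ih, heps]

include heps in
lemma moo_smul (a b : K) (ε : Fq) (u : ℕ) :
    moo q a (algebraMap Fq K ε * b) u = algebraMap Fq K ε * moo q a b u := by
  rw [moo, moo, mul_pow, eps_pow_qpow heps, mul_assoc]

end MooLemmas

section Core
variable {q : ℕ} (hq2 : 2 ≤ q) {K : Type} [Field K]
  {Fq : Type} [Field Fq] [Algebra Fq K]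
  (hfrob : ∀ u : ℕ, ∃ φ : K →+* K, ∀ x, φ x = x ^ q ^ u)
  (heps : ∀ ε : Fq, (algebraMap Fq K ε) ^ q = algebraMap Fq K ε)
  (hroot : ∀ x : K, x ^ q = x → ∃ ε : Fq, algebraMap Fq K ε = x)
  {ℓ : ℕ} (a : Fin ℓ → K) (ha : ∀ i, a i ≠ 0)
  (hconj : ∀ i i' : Fin ℓ, i ≠ i' → ¬ ∃ c : K, c ≠ 0 ∧ a i' = c ^ (q-1) * a i)

include hq2 hfrob heps hroot ha hconj in
lemma core {C : Type} [DecidableEq C] :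
    ∀ (N : ℕ) (S : Finset C), S.card = N → ∀ (s : C → Fin ℓ) (b lam : C → K),
    (∀ u : ℕ, u < N → ∑ c ∈ S, lam c * moo q (a (s c)) (b c) u = 0) →
    (∀ (i : Fin ℓ) (g : C → Fq),
        (∑ c ∈ S.filter (fun c => s c = i), algebraMap Fq K (g c) * b c = 0) →
        ∀ c ∈ S.filter (fun c => s c = i), g c = 0) →
    ∀ c ∈ S, lam c = 0 := by
  intro N
  induction N with
  | zero =>
    intro S hS s b lam _ _ c hc
    rw [Finset.card_eq_zero] at hS
    simp [hS] at hc
  | succ N IH =>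
    intro S hS s b lam hrel hind
    by_contra hcon
    push_neg at hcon
    obtain ⟨c0, hc0S, hc0⟩ := hcon
    obtain ⟨φ, hφ1⟩ := hfrob 1
    have hφq : ∀ x : K, φ x = x ^ q := fun x => by rw [hφ1, pow_one]
    -- step 1 : twisted relations
    have hrel1 : ∀ u : ℕ, u < N + 1 →
        ∑ c ∈ S, (lam c ^ q * (a (s c))⁻¹) * moo q (a (s c)) (b c) (u+1) = 0 := by
      intro u hu
      have h0 := congrArg φ (hrel u hu)
      rw [map_sum, map_zero] at h0
      rw [← h0]
      apply Finset.sum_congr rfl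
      intro c _
      rw [map_mul, hφq, hφq, ← moo_q hq2]
      field_simp [ha (s c)]
    -- step 2 : the combined coefficients
    set mu : C → K := fun c =>
      lam c0 * (lam c ^ q * (a (s c))⁻¹) - lam c0 ^ q * (a (s c0))⁻¹ * lam c with hmu
    have hmu0 : mu c0 = 0 := by simp only [hmu]; ring
    have hrel2 : ∀ u : ℕ, u < N →
        ∑ c ∈ S.erase c0, mu c * moo q (a (s c)) (b c ^ q * a (s c)) u = 0 := by
      intro u hu
      have e1 := hrel1 u (by omega)
      have e2 := hrel (u+1) (by omega)
      have hfull : ∑ c ∈ S, mu c * moo q (a (s c)) (b c) (u+1) = 0 := by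
        have hsplit : ∑ c ∈ S, mu c * moo q (a (s c)) (b c) (u+1) =
            lam c0 * ∑ c ∈ S, (lam c ^ q * (a (s c))⁻¹) * moo q (a (s c)) (b c) (u+1)
            - lam c0 ^ q * (a (s c0))⁻¹ *
              ∑ c ∈ S, lam c * moo q (a (s c)) (b c) (u+1) := by
          rw [Finset.mul_sum, Finset.mul_sum, ← Finset.sum_sub_distrib]
          exact Finset.sum_congr rfl (fun c _ => by simp only [hmu]; ring)
        rw [hsplit, e1, e2, mul_zero, mul_zero, sub_zero]
      rw [← Finset.add_sum_erase _ _ hc0S, hmu0, zero_mul, zero_add] at hfull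
      rw [← hfull]
      exact Finset.sum_congr rfl (fun c _ => by rw [← moo_succ hq2])
    -- step 3 : independence hypothesis for the erased set
    have hind2 : ∀ (i : Fin ℓ) (g : C → Fq),
        (∑ c ∈ (S.erase c0).filter (fun c => s c = i),
          algebraMap Fq K (g c) * (b c ^ q * a (s c)) = 0) →
        ∀ c ∈ (S.erase c0).filter (fun c => s c = i), g c = 0 := by
      intro i g hg
      have hsum : (∑ c ∈ (S.erase c0).filter (fun c => s c = i),
          algebraMap Fq K (g c) * b c) * a i = 0 := by
        have : φ (∑ c ∈ (S.erase c0).filter (fun c => s c = i),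
            algebraMap Fq K (g c) * b c) * a i = 0 := by
          rw [map_sum, Finset.sum_mul, ← hg]
          apply Finset.sum_congr rfl
          intro c hc
          have hsc : s c = i := (Finset.mem_filter.mp hc).2
          rw [map_mul, hφq, hφq, heps, hsc]
          ring
        rcases mul_eq_zero.mp this with h | h
        · exact mul_eq_zero_of_left (φ.injective (by rw [h, map_zero])) _
        · exact absurd h (ha i)
      have h2 : ∑ c ∈ (S.erase c0).filter (fun c => s c = i),
          algebraMap Fq K (g c) * b c = 0 := by
        rcases mul_eq_zero.mp hsum with h | h
        · exact h
        · exact absurd h (ha i)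
      set g' : C → Fq := fun c => if c = c0 then 0 else g c with hg'
      have hfe : (S.erase c0).filter (fun c => s c = i) =
          (S.filter (fun c => s c = i)).erase c0 := Finset.filter_erase _ _ _
      have hS' : ∑ c ∈ S.filter (fun c => s c = i),
          algebraMap Fq K (g' c) * b c = 0 := by
        by_cases hc0f : c0 ∈ S.filter (fun c => s c = i)
        · rw [← Finset.add_sum_erase _ _ hc0f]
          have : algebraMap Fq K (g' c0) * b c0 = 0 := by simp [hg']
          rw [this, zero_add, ← hfe, ← h2]
          apply Finset.sum_congr rfl
          intro c hc
          have : c ≠ c0 := Finset.ne_of_mem_erase (hfe ▸ hc)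
          simp [hg', this]
        · have : (S.filter (fun c => s c = i)).erase c0 =
              S.filter (fun c => s c = i) := Finset.erase_eq_of_notMem hc0f
          rw [← this, ← hfe, ← h2]
          apply Finset.sum_congr rfl
          intro c hc
          have : c ≠ c0 := Finset.ne_of_mem_erase (hfe ▸ hc)
          simp [hg', this]
      intro c hc
      have hcne : c ≠ c0 := Finset.ne_of_mem_erase (hfe ▸ hc)
      have hcf : c ∈ S.filter (fun c => s c = i) := by
        rw [hfe] at hc; exact Finset.mem_of_mem_erase hc
      have := hind i g' hS' c hcf
      simpa [hg', hcne] using this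
    -- step 4 : apply induction hypothesis
    have hcard : (S.erase c0).card = N := by
      rw [Finset.card_erase_of_mem hc0S, hS]
      omega
    have hmuz : ∀ c ∈ S.erase c0, mu c = 0 :=
      IH (S.erase c0) hcard s (fun c => b c ^ q * a (s c)) mu hrel2 hind2
    -- step 5 : conjugacy argument
    have hq1 : 1 ≤ q := by omega
    have hkey : ∀ c ∈ S, ∃ ε : Fq,
        lam c = algebraMap Fq K ε * lam c0 ∧ (lam c ≠ 0 → s c = s c0) := by
      intro c hc
      by_cases hcc0 : c = c0
      · exact ⟨1, by simp [hcc0], fun _ => by rw [hcc0]⟩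
      by_cases hlc : lam c = 0
      · exact ⟨0, by simp [hlc], fun hl => absurd hlc hl⟩
      have hmuc : mu c = 0 := hmuz c (Finset.mem_erase.mpr ⟨hcc0, hc⟩)
      have h1 : lam c0 * (lam c ^ q * (a (s c))⁻¹) =
          lam c0 ^ q * (a (s c0))⁻¹ * lam c := sub_eq_zero.mp hmuc
      set d := lam c * (lam c0)⁻¹ with hd
      have hd0 : d ≠ 0 := mul_ne_zero hlc (inv_ne_zero hc0)
      have hdq1 : d ^ (q-1) * d = d ^ q := by
        rw [← pow_succ, Nat.sub_add_cancel hq1]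
      have h3 : d ^ q * a (s c0) = d * a (s c) := by
        rw [hd, mul_pow, inv_pow]
        field_simp [ha (s c), ha (s c0), hc0, hlc] at h1 ⊢
        linear_combination h1
      have hdq : d ^ (q-1) * a (s c0) = a (s c) := by
        have h4 : d * (d ^ (q-1) * a (s c0)) = d * a (s c) := by
          rw [← h3, ← hdq1]; ring
        exact mul_left_cancel₀ hd0 h4
      have hss : s c = s c0 := by
        by_contra hne
        exact hconj (s c0) (s c) (fun hh => hne hh.symm) ⟨d, hd0, hdq.symm⟩
      have hd1 : d ^ (q-1) = 1 := by
        have := hdq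
        rw [hss] at this
        exact mul_right_cancel₀ (ha (s c0)) (by rw [this, one_mul])
      have hdqd : d ^ q = d := by rw [← hdq1, hd1, one_mul]
      obtain ⟨ε, hε⟩ := hroot d hdqd
      refine ⟨ε, ?_, fun _ => hss⟩
      rw [hε, hd]
      field_simp
    -- step 6 : contradiction with independence at row 0
    have hkey' : ∀ c : C, ∃ ε : Fq, c ∈ S →
        (lam c = algebraMap Fq K ε * lam c0 ∧ (lam c ≠ 0 → s c = s c0)) := by
      intro c
      by_cases hc : c ∈ S
      · obtain ⟨ε, hε⟩ := hkey c hc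
        exact ⟨ε, fun _ => hε⟩
      · exact ⟨0, fun h => absurd h hc⟩
    choose g hg using hkey'
    have h00 : ∑ c ∈ S, lam c * b c = 0 := by
      have := hrel 0 (by omega)
      rw [← this]
      exact Finset.sum_congr rfl (fun c _ => by rw [moo_zero hq2])
    have hsum0 : ∑ c ∈ S.filter (fun c => s c = s c0),
        algebraMap Fq K (g c) * b c = 0 := by
      have hsplit : ∑ c ∈ S, (lam c0)⁻¹ * (lam c * b c) =
          ∑ c ∈ S.filter (fun c => s c = s c0), (lam c0)⁻¹ * (lam c * b c) +
          ∑ c ∈ S.filter (fun c => ¬ s c = s c0), (lam c0)⁻¹ * (lam c * b c) :=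
        (Finset.sum_filter_add_sum_filter_not S _ _).symm
      have hz : ∑ c ∈ S.filter (fun c => ¬ s c = s c0),
          (lam c0)⁻¹ * (lam c * b c) = 0 := by
        apply Finset.sum_eq_zero
        intro c hc
        obtain ⟨hcS, hcs⟩ := Finset.mem_filter.mp hc
        have : lam c = 0 := by
          by_contra hlc
          exact hcs ((hg c hcS).2 hlc)
        rw [this]; ring
      have hmain : ∑ c ∈ S.filter (fun c => s c = s c0),
          algebraMap Fq K (g c) * b c =
          ∑ c ∈ S.filter (fun c => s c = s c0), (lam c0)⁻¹ * (lam c * b c) := by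
        apply Finset.sum_congr rfl
        intro c hc
        obtain ⟨hcS, _⟩ := Finset.mem_filter.mp hc
        rw [(hg c hcS).1]
        field_simp
      rw [hmain]
      have : ∑ c ∈ S, (lam c0)⁻¹ * (lam c * b c) = 0 := by
        rw [← Finset.mul_sum, h00, mul_zero]
      rw [hsplit, hz, add_zero] at this
      exact this
    have hg0 : g c0 = 0 :=
      hind (s c0) g hsum0 c0 (Finset.mem_filter.mpr ⟨hc0S, rfl⟩)
    have : lam c0 = 0 := by
      have := (hg c0 hc0S).1
      rw [hg0, map_zero, zero_mul] at this
      exact this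
    exact hc0 this

end Core

/-! ### Auxiliary linear algebra lemmas -/

section Aux
variable {Fq : Type} [Field Fq]

/-- extend a nonzero vector to an invertible matrix having it as a column -/
lemma ext_col {r : ℕ} (c : Fin r → Fq) (hc : c ≠ 0) :
    ∃ (B : Matrix (Fin r) (Fin r) Fq) (k0 : Fin r),
      IsUnit B.det ∧ ∀ k', B k' k0 = c k' := by
  classical
  obtain ⟨k0, hk0⟩ := Function.ne_iff.mp hc
  simp only [Pi.zero_apply] at hk0
  refine ⟨fun k' k => if k = k0 then c k' else if k' = k then 1 else 0, k0, ?_, ?_⟩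
  · rw [isUnit_iff_ne_zero]
    intro hdet
    obtain ⟨x, hx0, hx⟩ := Matrix.exists_mulVec_eq_zero_iff.mpr hdet
    have hmv : ∀ k', (∑ k, (if k = k0 then c k' else if k' = k then 1 else 0) * x k) = 0 :=
      fun k' => congrFun hx k'
    have hterm : ∀ k', (∑ k, (if k = k0 then c k' else if k' = k then 1 else 0) * x k)
        = c k' * x k0 + (if k' = k0 then 0 else x k') := by
      intro k'
      rw [← Finset.add_sum_erase _ _ (Finset.mem_univ k0), if_pos rfl]
      congr 1
      by_cases hk' : k' = k0
      · rw [if_pos hk']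
        apply Finset.sum_eq_zero
        intro k hk
        have h1 : ¬ k = k0 := Finset.ne_of_mem_erase hk
        have h2 : ¬ k' = k := fun hh => h1 (hh ▸ hk')
        simp [h1, h2]
      · rw [if_neg hk']
        rw [Finset.sum_eq_single_of_mem k' (Finset.mem_erase.mpr ⟨hk', Finset.mem_univ _⟩)]
        · simp [hk']
        · intro k hk hkne
          have h1 : ¬ k = k0 := Finset.ne_of_mem_erase hk
          simp [h1, Ne.symm hkne]
    have hxk0 : x k0 = 0 := by
      have := (hterm k0).symm.trans (hmv k0)
      rw [if_pos rfl, add_zero] at this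
      rcases mul_eq_zero.mp this with h | h
      · exact absurd h hk0
      · exact h
    apply hx0
    funext k'
    by_cases hk' : k' = k0
    · rw [hk', hxk0]; rfl
    · have := (hterm k').symm.trans (hmv k')
      rw [if_neg hk', hxk0, mul_zero, zero_add] at this
      exact this
  · intro k'; simp

/-- an injection from `Fin h` hitting a prescribed small finset -/
lemma inj_ext {α : Type} [Fintype α] [DecidableEq α] (T : Finset α) (h : ℕ)
    (hT : T.card ≤ h) (hh : h ≤ Fintype.card α) :
    ∃ f : Fin h → α, Function.Injective f ∧ ↑T ⊆ Set.range f := by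
  obtain ⟨S, hTS, _, hS⟩ := Finset.exists_subsuperset_card_eq (T.subset_univ)
    hT (by rwa [Finset.card_univ])
  have e : S ≃ Fin h := S.equivFin.trans (finCongr hS)
  refine ⟨fun v => (e.symm v : α), fun v w hvw => ?_, fun x hx => ?_⟩
  · have := Subtype.ext hvw
    exact e.symm.injective this
  · exact ⟨e ⟨x, hTS hx⟩, by simp⟩

variable {K : Type} [Field K] [Algebra Fq K]

/-- sum of elements of independent submodules vanishing forces each to vanish -/
lemma sum_eq_zero_parts {μ : ℕ} (H : Fin μ → Submodule Fq K) (J : Finset (Fin μ))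
    (hdisj : ∀ j ∈ J, H j ⊓ (⨆ j' ∈ J.erase j, H j') = ⊥)
    (x : Fin μ → K) (hx : ∀ j ∈ J, x j ∈ H j)
    (hsum : ∑ j ∈ J, x j = 0) : ∀ j ∈ J, x j = 0 := by
  intro j hj
  have h1 : x j = - ∑ j' ∈ J.erase j, x j' := by
    rw [← Finset.add_sum_erase _ _ hj] at hsum
    exact eq_neg_of_add_eq_zero_left hsum
  have h2 : x j ∈ ⨆ j' ∈ J.erase j, H j' := by
    rw [h1]
    apply Submodule.neg_mem
    apply Submodule.sum_mem
    intro j' hj'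
    have : H j' ≤ ⨆ j' ∈ J.erase j, H j' := le_biSup _ hj'
    exact this (hx j' (Finset.mem_of_mem_erase hj'))
  have : x j ∈ H j ⊓ (⨆ j' ∈ J.erase j, H j') := Submodule.mem_inf.mpr ⟨hx j hj, h2⟩
  rw [hdisj j hj] at this
  simpa using this

end Aux

section Det
variable {q : ℕ} (hq2 : 2 ≤ q) {K : Type} [Field K]
  {Fq : Type} [Field Fq] [Algebra Fq K]
  (hfrob : ∀ u : ℕ, ∃ φ : K →+* K, ∀ x, φ x = x ^ q ^ u)
  (heps : ∀ ε : Fq, (algebraMap Fq K ε) ^ q = algebraMap Fq K ε)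
  (hroot : ∀ x : K, x ^ q = x → ∃ ε : Fq, algebraMap Fq K ε = x)
  {ℓ : ℕ} (a : Fin ℓ → K) (ha : ∀ i, a i ≠ 0)
  (hconj : ∀ i i' : Fin ℓ, i ≠ i' → ¬ ∃ c : K, c ≠ 0 ∧ a i' = c ^ (q-1) * a i)

include hq2 hfrob heps hroot ha hconj in
lemma det_moo {h' : ℕ} (s : Fin h' → Fin ℓ) (b : Fin h' → K)
    (hindep : ∀ (i : Fin ℓ) (g : Fin h' → Fq),
      (∑ v ∈ Finset.univ.filter (fun v => s v = i), algebraMap Fq K (g v) * b v = 0) →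
      ∀ v ∈ Finset.univ.filter (fun v => s v = i), g v = 0) :
    IsUnit (Matrix.of fun u v : Fin h' => moo q (a (s v)) (b v) (u : ℕ)).det := by
  classical
  rw [isUnit_iff_ne_zero]
  intro hdet
  obtain ⟨lam, hlam0, hlam⟩ := Matrix.exists_mulVec_eq_zero_iff.mpr hdet
  have hrel : ∀ u : ℕ, u < h' →
      ∑ v ∈ (Finset.univ : Finset (Fin h')), lam v * moo q (a (s v)) (b v) u = 0 := by
    intro u hu
    have := congrFun hlam ⟨u, hu⟩
    simp only [Matrix.mulVec, dotProduct, Matrix.of_apply, Pi.zero_apply] at this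
    rw [← this]
    exact Finset.sum_congr rfl (fun v _ => mul_comm _ _)
  have := core hq2 hfrob heps hroot a ha hconj h' Finset.univ (by simp) s b lam hrel hindep
  exact hlam0 (funext fun v => this v (Finset.mem_univ v))

end Det

section NotMDS

lemma not_MDS_of_dependent {K : Type} [Field K] {h : ℕ} {ι : Type} [Fintype ι]
    [DecidableEq ι] (M : Matrix (Fin h) ι K) (T : Finset ι) (hT : T.card ≤ h)
    (hcard : h ≤ Fintype.card ι) (coef : ι → K) (hsupp : ∀ c ∉ T, coef c = 0)
    (c0 : ι) (hc0 : coef c0 ≠ 0)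
    (hrel : ∀ u : Fin h, ∑ c ∈ T, M u c * coef c = 0) : ¬ IsMDSMatrix M := by
  intro hMDS
  obtain ⟨f, hf, hfT⟩ := inj_ext T h hT hcard
  have hunit := hMDS f hf
  rw [isUnit_iff_ne_zero] at hunit
  apply hunit
  rw [← Matrix.exists_mulVec_eq_zero_iff]
  have hc0T : c0 ∈ T := by
    by_contra hc
    exact hc0 (hsupp c0 hc)
  obtain ⟨v0, hv0⟩ := hfT hc0T
  refine ⟨fun v => coef (f v), ?_, ?_⟩
  · intro heq
    have := congrFun heq v0
    rw [hv0] at this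
    exact hc0 this
  · funext u
    simp only [Matrix.mulVec, dotProduct, Matrix.submatrix_apply, id, Pi.zero_apply]
    have h1 : ∑ c ∈ Finset.univ.image f, M u c * coef c =
        ∑ v : Fin h, M u (f v) * coef (f v) :=
      Finset.sum_image (fun x _ y _ hxy => hf hxy)
    have hTsub : T ⊆ Finset.univ.image f := by
      intro c hc
      obtain ⟨v, hv⟩ := hfT hc
      exact Finset.mem_image.mpr ⟨v, Finset.mem_univ v, hv⟩
    have h2 : ∑ c ∈ Finset.univ.image f, M u c * coef c = ∑ c ∈ T, M u c * coef c := by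
      symm
      apply Finset.sum_subset hTsub
      intro c _ hcT
      rw [hsupp c hcT, mul_zero]
    rw [← h1, h2, hrel u]

end NotMDS


/-- With all blocks of evaluation points equal to `β`, the extended Moore
matrix is MSRD for the length partition `(ℓμ, r)` over `F_q` iff (1) each subspace
`H_i = span_{F_q}(β_{(i-1)r+1},…,β_{ir})` has dimension `r`, and (2) each `H_i`
intersects trivially any sum of at most `min{h,μ} - 1` of the other subspaces. -/
theorem extended_moore_isMSRD_iff_subspace_conditions
    (q m r μ ℓ : ℕ) (hq : IsPrimePow q) (hm : 0 < m) (hr : 0 < r)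
    (hμ : 0 < μ) (hℓ : 0 < ℓ)
    (Fq K : Type) [Field Fq] [Field K] [Fintype Fq] [Fintype K] [Algebra Fq K]
    (hcardFq : Fintype.card Fq = q) (hcardK : Fintype.card K = q ^ m)
    (a : Fin ℓ → K) (ha : ∀ i, a i ≠ 0)
    (hconj : ∀ i i' : Fin ℓ, i ≠ i' →
      ¬ ∃ c : K, c ≠ 0 ∧ a i' = c ^ (q - 1) * a i)
    (β : Fin μ → Fin r → K)
    (h : ℕ) (hh1 : 1 ≤ h) (hh2 : h ≤ ℓ * μ * r)
    (M : Matrix (Fin h) ((Fin ℓ × Fin μ) × Fin r) K)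
    (hM : ∀ (u : Fin h) (c : (Fin ℓ × Fin μ) × Fin r),
      M u c = β c.1.2 c.2 ^ q ^ (u : ℕ) *
        a c.1.1 ^ ((q ^ (u : ℕ) - 1) / (q - 1)))
    (H : Fin μ → Submodule Fq K)
    (hH : ∀ i, H i = Submodule.span Fq (Set.range (β i))) :
    IsMSRDMatrix Fq M ↔
      ((∀ i, Module.finrank Fq ↥(H i) = r) ∧
        ∀ (i : Fin μ) (Γ : Finset (Fin μ)), i ∉ Γ → Γ.card ≤ min h μ - 1 →
          H i ⊓ (⨆ j ∈ Γ, H j) = ⊥) := by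
  classical
  obtain ⟨p, n, hpp, hn, hpq⟩ := hq
  have hp' : Nat.Prime p := Nat.prime_iff.mpr hpp
  have hq2 : 2 ≤ q := by
    rw [← hpq]
    calc 2 ≤ p := hp'.two_le
    _ ≤ p ^ n := Nat.le_self_pow hn.ne' p
  have hfrob : ∀ u : ℕ, ∃ φ : K →+* K, ∀ x, φ x = x ^ q ^ u :=
    frobK hp' hn hpq hm hcardK
  have heps : ∀ ε : Fq, (algebraMap Fq K ε) ^ q = algebraMap Fq K ε := epsK hcardFq
  have hroot : ∀ x : K, x ^ q = x → ∃ ε : Fq, algebraMap Fq K ε = x :=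
    rootK hp' hn hpq hcardFq
  have hM' : ∀ (u : Fin h) (c : (Fin ℓ × Fin μ) × Fin r),
      M u c = moo q (a c.1.1) (β c.1.2 c.2) (u : ℕ) := hM
  set bb : ((Fin ℓ × Fin μ) → Matrix (Fin r) (Fin r) Fq) →
      ((Fin ℓ × Fin μ) × Fin r) → K :=
    fun A col => ∑ k', algebraMap Fq K (A col.1 k' col.2) * β col.1.2 k' with hbb
  have hMD : ∀ (A : (Fin ℓ × Fin μ) → Matrix (Fin r) (Fin r) Fq) (u : Fin h)
      (col : (Fin ℓ × Fin μ) × Fin r),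
      (M * BlockDiag Fq K A) u col = moo q (a col.1.1) (bb A col) (u : ℕ) := by
    intro A u col
    rw [Matrix.mul_apply]
    have hterm : ∀ y : (Fin ℓ × Fin μ) × Fin r,
        M u y * BlockDiag Fq K A y col =
        if y.1 = col.1 then
          moo q (a col.1.1) (algebraMap Fq K (A col.1 y.2 col.2) * β col.1.2 y.2)
            (u : ℕ) else 0 := by
      intro y
      show M u y * (if y.1 = col.1 then algebraMap Fq K (A y.1 y.2 col.2) else 0) = _
      by_cases hy : y.1 = col.1
      · rw [if_pos hy, if_pos hy, hM' u y, moo_smul heps, hy, mul_comm]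
      · rw [if_neg hy, if_neg hy, mul_zero]
    rw [Finset.sum_congr rfl (fun y _ => hterm y), Fintype.sum_prod_type]
    have hout : ∀ y1 : Fin ℓ × Fin μ,
        (∑ y2 : Fin r, if y1 = col.1 then
          moo q (a col.1.1) (algebraMap Fq K (A col.1 y2 col.2) * β col.1.2 y2)
            (u : ℕ) else 0) =
        if y1 = col.1 then (∑ y2 : Fin r,
          moo q (a col.1.1) (algebraMap Fq K (A col.1 y2 col.2) * β col.1.2 y2)
            (u : ℕ)) else 0 := by
      intro y1
      split <;> simp
    rw [Finset.sum_congr rfl (fun y1 _ => hout y1), Finset.sum_ite_eq' Finset.univ,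
      if_pos (Finset.mem_univ _)]
    exact (moo_sum hfrob Finset.univ _ _ _).symm
  have hcards : h ≤ Fintype.card ((Fin ℓ × Fin μ) × Fin r) := by
    have : Fintype.card ((Fin ℓ × Fin μ) × Fin r) = ℓ * μ * r := by simp
    rw [this]; exact hh2
  set i0 : Fin ℓ := ⟨0, hℓ⟩ with hi0
  constructor
  · -- MSRD implies the two conditions
    intro hmsrd
    constructor
    · -- condition (1)
      intro j
      by_contra hfr
      have hnli : ¬ LinearIndependent Fq (β j) := by
        intro hli
        apply hfr
        have hc := linearIndependent_iff_card_eq_finrank_span.mp hli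
        rw [Fintype.card_fin] at hc
        rw [hH j]
        exact hc.symm
      obtain ⟨g, hgsum, k1, hgk1⟩ := Fintype.not_linearIndependent_iff.mp hnli
      have hgne : g ≠ 0 := fun hg0 => hgk1 (by rw [hg0]; rfl)
      obtain ⟨B, k0, hBdet, hBcol⟩ := ext_col g hgne
      set A := fun blk : Fin ℓ × Fin μ =>
        if blk = (i0, j) then B else (1 : Matrix (Fin r) (Fin r) Fq) with hA'
      have hA : ∀ blk, IsUnit (A blk).det := by
        intro blk
        by_cases hb : blk = (i0, j)
        · simpa [hA', hb] using hBdet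
        · simp [hA', hb]
      refine not_MDS_of_dependent (M * BlockDiag Fq K A) {((i0, j), k0)}
        (by simp; omega) hcards
        (fun col => if col = ((i0, j), k0) then 1 else 0) ?_ ((i0, j), k0)
        (by simp) ?_ (hmsrd A hA)
      · intro c hc
        have hcne : ¬ c = ((i0, j), k0) := by simpa using hc
        simp [hcne]
      · intro u
        rw [Finset.sum_singleton]
        have hco : (fun col => if col = ((i0, j), k0) then (1 : K) else 0)
            ((i0, j), k0) = 1 := by simp
        rw [if_pos rfl, mul_one, hMD]
        have hbb0 : bb A ((i0, j), k0) = 0 := by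
          rw [hbb]
          simp only [hA', if_pos rfl]
          rw [← hgsum]
          apply Finset.sum_congr rfl
          intro k' _
          rw [hBcol k', Algebra.smul_def]
        rw [hbb0, moo_b_zero _ _ (by omega)]
    · -- condition (2)
      intro jst Γ hnotin hΓcard
      by_contra hne
      obtain ⟨x, hxmem, hx0⟩ := (Submodule.ne_bot_iff _).mp hne
      obtain ⟨hxH, hxS⟩ := Submodule.mem_inf.mp hxmem
      rw [Submodule.mem_iSup_finset_iff_exists_sum] at hxS
      obtain ⟨vv, hvv⟩ := hxS
      set v : Fin μ → K := fun j => (vv j : K) with hv'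
      have hvH : ∀ j, v j ∈ H j := fun j => (vv j).2
      have hcoeff : ∀ j : Fin μ, ∃ cc : Fin r → Fq, (∑ k, cc k • β j k) = v j := by
        intro j
        have := hvH j
        rw [hH j] at this
        exact (Submodule.mem_span_range_iff_exists_fun Fq).mp this
      choose cv hcv using hcoeff
      have hxHj : x ∈ Submodule.span Fq (Set.range (β jst)) := by rw [← hH jst]; exact hxH
      obtain ⟨cx, hcx⟩ := (Submodule.mem_span_range_iff_exists_fun Fq).mp hxHj
      have hcxne : cx ≠ 0 := by
        rintro rfl
        apply hx0
        rw [← hcx]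
        simp
      set Γ' := Γ.filter (fun j => v j ≠ 0) with hΓ'
      have hcvne : ∀ j ∈ Γ', cv j ≠ 0 := by
        intro j hj h0
        refine (Finset.mem_filter.mp hj).2 ?_
        rw [← hcv j, h0]
        simp
      have hjstΓ' : jst ∉ Γ' := fun hmem => hnotin (Finset.filter_subset _ _ hmem)
      have hBall : ∀ j : Fin μ, ∃ Bk : Matrix (Fin r) (Fin r) Fq × Fin r,
          IsUnit Bk.1.det ∧ (j = jst → ∀ k', Bk.1 k' Bk.2 = cx k') ∧
          (j ∈ Γ' → ∀ k', Bk.1 k' Bk.2 = cv j k') := by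
        intro j
        by_cases hj : j = jst
        · obtain ⟨B, k0, hd, hcol⟩ := ext_col cx hcxne
          exact ⟨(B, k0), hd, fun _ => hcol, fun hmem => absurd (hj ▸ hmem) hjstΓ'⟩
        · by_cases hj2 : j ∈ Γ'
          · obtain ⟨B, k0, hd, hcol⟩ := ext_col (cv j) (hcvne j hj2)
            exact ⟨(B, k0), hd, fun hh => absurd hh hj, fun _ => hcol⟩
          · exact ⟨(1, ⟨0, hr⟩), by simp, fun hh => absurd hh hj, fun hh => absurd hh hj2⟩
      choose Bk hBdet hBspec using hBall
      set A := fun blk : Fin ℓ × Fin μ =>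
        if blk.1 = i0 then (Bk blk.2).1 else 1 with hA'
      have hA : ∀ blk, IsUnit (A blk).det := by
        intro blk
        by_cases hb : blk.1 = i0
        · simpa [hA', hb] using hBdet blk.2
        · simp [hA', hb]
      set T : Finset ((Fin ℓ × Fin μ) × Fin r) :=
        insert ((i0, jst), (Bk jst).2) (Γ'.image (fun j => ((i0, j), (Bk j).2))) with hT
      have hminhμ : 1 ≤ min h μ := le_min hh1 hμ
      have hTcard : T.card ≤ h := by
        calc T.card ≤ (Γ'.image (fun j => ((i0, j), (Bk j).2))).card + 1 :=
              Finset.card_insert_le _ _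
        _ ≤ Γ'.card + 1 := by
              have := Finset.card_image_le
                (s := Γ') (f := fun j => ((i0, j), (Bk j).2))
              omega
        _ ≤ Γ.card + 1 := by
              have hsub : Γ' ⊆ Γ := by rw [hΓ']; exact Finset.filter_subset _ _
              have := Finset.card_le_card hsub
              omega
        _ ≤ min h μ := by omega
        _ ≤ h := min_le_left _ _
      set coef : ((Fin ℓ × Fin μ) × Fin r) → K := fun col =>
        if col = ((i0, jst), (Bk jst).2) then (-1 : K)
        else if col.1.1 = i0 ∧ col.1.2 ∈ Γ' ∧ col.2 = (Bk col.1.2).2 then 1 else 0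
        with hcoef
      have hjstim : ((i0, jst), (Bk jst).2) ∉
          Γ'.image (fun j => ((i0, j), (Bk j).2)) := by
        intro hmem
        obtain ⟨j, hjΓ', hjeq⟩ := Finset.mem_image.mp hmem
        have : j = jst := by
          have := congrArg (fun z => z.1.2) hjeq
          simpa using this
        exact hjstΓ' (this ▸ hjΓ')
      have hsupp : ∀ col, col ∉ T → coef col = 0 := by
        intro col hcol
        obtain ⟨⟨c1, c2⟩, c3⟩ := col
        simp only [hcoef]
        have h1' : ¬ ((c1, c2), c3) = ((i0, jst), (Bk jst).2) :=
          fun hh => hcol (hh ▸ Finset.mem_insert_self _ _)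
        rw [if_neg h1']
        have h2' : ¬ (((c1, c2), c3).1.1 = i0 ∧ ((c1, c2), c3).1.2 ∈ Γ' ∧
            ((c1, c2), c3).2 = (Bk ((c1, c2), c3).1.2).2) := by
          rintro ⟨ha1, ha2, ha3⟩
          simp only at ha1 ha2 ha3
          subst ha1
          subst ha3
          apply hcol
          rw [hT]
          apply Finset.mem_insert_of_mem
          exact Finset.mem_image.mpr ⟨c2, ha2, rfl⟩
        rw [if_neg h2']
      have hrel : ∀ u : Fin h,
          ∑ col ∈ T, (M * BlockDiag Fq K A) u col * coef col = 0 := by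
        intro u
        rw [hT, Finset.sum_insert hjstim]
        have hbbx : bb A ((i0, jst), (Bk jst).2) = x := by
          rw [hbb]
          simp only [hA', if_pos rfl]
          rw [← hcx]
          apply Finset.sum_congr rfl
          intro k' _
          rw [(hBspec jst).1 rfl k', Algebra.smul_def]
        have hterm1 : (M * BlockDiag Fq K A) u ((i0, jst), (Bk jst).2) *
            coef ((i0, jst), (Bk jst).2) = - moo q (a i0) x (u : ℕ) := by
          rw [hMD, hbbx]
          simp only [hcoef]
          simp
        have hterm2 : ∑ col ∈ Γ'.image (fun j => ((i0, j), (Bk j).2)),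
            (M * BlockDiag Fq K A) u col * coef col =
            ∑ j ∈ Γ', moo q (a i0) (v j) (u : ℕ) := by
          rw [Finset.sum_image (by
            intro j1 _ j2 _ hj
            have := congrArg (fun z => z.1.2) hj
            simpa using this)]
          apply Finset.sum_congr rfl
          intro j hjΓ'
          have hjne : ¬ ((i0, j), (Bk j).2) = ((i0, jst), (Bk jst).2) := by
            intro hh
            have : j = jst := by
              have := congrArg (fun z => z.1.2) hh
              simpa using this
            exact hjstΓ' (this ▸ hjΓ')
          have hcond : ((i0, j), (Bk j).2).1.1 = i0 ∧ ((i0, j), (Bk j).2).1.2 ∈ Γ' ∧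
              ((i0, j), (Bk j).2).2 = (Bk ((i0, j), (Bk j).2).1.2).2 := ⟨rfl, hjΓ', rfl⟩
          have hbbj : bb A ((i0, j), (Bk j).2) = v j := by
            rw [hbb]
            simp only [hA', if_pos rfl]
            rw [← hcv j]
            apply Finset.sum_congr rfl
            intro k' _
            rw [(hBspec j).2 hjΓ' k', Algebra.smul_def]
          rw [hMD, hbbj]
          simp only [hcoef]
          rw [if_neg hjne]
          simp [hjΓ']
        rw [hterm1, hterm2]
        have hsum' : ∑ j ∈ Γ', v j = x := by
          rw [hΓ']
          rw [Finset.sum_filter_ne_zero]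
          exact hvv
        have : ∑ j ∈ Γ', moo q (a i0) (v j) (u : ℕ) = moo q (a i0) x (u : ℕ) := by
          rw [← moo_sum hfrob, hsum']
        rw [this]
        ring
      exact not_MDS_of_dependent (M * BlockDiag Fq K A) T hTcard hcards coef hsupp
        ((i0, jst), (Bk jst).2) (by simp only [hcoef]; simp) hrel (hmsrd A hA)
  · -- conditions imply MSRD
    rintro ⟨h1, h2⟩ A hA f hf
    have hliβ : ∀ j, LinearIndependent Fq (β j) := by
      intro j
      rw [linearIndependent_iff_card_eq_finrank_span, Fintype.card_fin]
      have := h1 j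
      rw [hH j] at this
      exact this.symm
    have hβsum : ∀ (j : Fin μ) (G : Fin r → Fq), (∑ k, G k • β j k) = 0 → G = 0 := by
      intro j G hG
      have := Fintype.linearIndependent_iff.mp (hliβ j) G hG
      funext k
      exact this k
    have hindep : ∀ (i : Fin ℓ) (g : Fin h → Fq),
        (∑ v ∈ Finset.univ.filter (fun v => (f v).1.1 = i),
          algebraMap Fq K (g v) * bb A (f v) = 0) →
        ∀ v ∈ Finset.univ.filter (fun v => (f v).1.1 = i), g v = 0 := by
      intro i g hgsum v hv
      set F := Finset.univ.filter (fun v : Fin h => (f v).1.1 = i) with hF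
      set J := F.image (fun v => (f v).1.2) with hJ
      have hJh : J.card ≤ h := by
        calc J.card ≤ F.card := Finset.card_image_le
        _ ≤ (Finset.univ : Finset (Fin h)).card := Finset.card_filter_le _ _
        _ = h := by simp
      have hJμ : J.card ≤ μ := by
        calc J.card ≤ (Finset.univ : Finset (Fin μ)).card := Finset.card_le_univ J
        _ = μ := by simp
      have hdisj : ∀ j ∈ J, H j ⊓ (⨆ j' ∈ J.erase j, H j') = ⊥ := by
        intro j hj
        apply h2 j (J.erase j) (Finset.notMem_erase j J)
        rw [Finset.card_erase_of_mem hj]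
        have hle : J.card ≤ min h μ := le_min hJh hJμ
        omega
      set x : Fin μ → K := fun j => ∑ v' ∈ F.filter (fun v' => (f v').1.2 = j),
        algebraMap Fq K (g v') * bb A (f v') with hx
      have hbbmem : ∀ v' : Fin h, bb A (f v') ∈ H ((f v').1.2) := by
        intro v'
        rw [hH, hbb]
        apply Submodule.sum_mem
        intro k' _
        rw [← Algebra.smul_def]
        exact Submodule.smul_mem _ _ (Submodule.subset_span (Set.mem_range_self k'))
      have hxmem : ∀ j ∈ J, x j ∈ H j := by
        intro j hj
        apply Submodule.sum_mem
        intro v' hv'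
        obtain ⟨hv'F, hv'j⟩ := Finset.mem_filter.mp hv'
        rw [← Algebra.smul_def]
        exact Submodule.smul_mem _ _ (hv'j ▸ hbbmem v')
      have hxsum : ∑ j ∈ J, x j = 0 := by
        rw [hx, Finset.sum_fiberwise_of_maps_to
          (fun v' hv' => Finset.mem_image_of_mem _ hv')]
        exact hgsum
      have hxz : ∀ j ∈ J, x j = 0 := sum_eq_zero_parts H J hdisj x hxmem hxsum
      obtain ⟨hvuniv, hvi⟩ := Finset.mem_filter.mp hv
      have hvF : v ∈ F := hv
      set j := (f v).1.2 with hj'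
      have hjJ : j ∈ J := Finset.mem_image_of_mem _ hvF
      set Fj := F.filter (fun v' => (f v').1.2 = j) with hFj
      have hfv1 : ∀ v' ∈ Fj, (f v').1 = (i, j) := by
        intro v' hv'
        obtain ⟨hv'F, hv'j⟩ := Finset.mem_filter.mp hv'
        exact Prod.ext ((Finset.mem_filter.mp hv'F).2) hv'j
      set w : Fin r → K := fun k => ∑ k', algebraMap Fq K (A (i, j) k' k) * β j k'
        with hw
      have hwli : ∀ G : Fin r → Fq, (∑ k, G k • w k) = 0 → G = 0 := by
        intro G hG
        have hswap : ∑ k, G k • w k =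
            ∑ k', (∑ k, A (i, j) k' k * G k) • β j k' := by
          simp only [hw, Algebra.smul_def, Finset.mul_sum, Finset.sum_mul, map_sum,
            map_mul]
          rw [Finset.sum_comm]
          exact Finset.sum_congr rfl fun k' _ => Finset.sum_congr rfl fun k _ => by ring
        rw [hswap] at hG
        have hcoe := hβsum j _ hG
        have hAG : (A (i, j)).mulVec G = 0 := by
          funext k'
          exact congrFun hcoe k'
        have hG' := congrArg (fun z => (A (i, j))⁻¹.mulVec z) hAG
        simpa [Matrix.mulVec_mulVec, Matrix.nonsing_inv_mul _ (hA (i, j)),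
          Matrix.one_mulVec, Matrix.mulVec_zero] using hG'
      set G : Fin r → Fq := fun k => ∑ v' ∈ Fj.filter (fun v' => (f v').2 = k), g v'
        with hG'
      have hGsum : ∑ k, G k • w k = 0 := by
        have hc1 : ∀ k : Fin r, G k • w k =
            ∑ v' ∈ Fj.filter (fun v' => (f v').2 = k), g v' • w ((f v').2) := by
          intro k
          rw [hG', Finset.sum_smul]
          apply Finset.sum_congr rfl
          intro v' hv'
          rw [(Finset.mem_filter.mp hv').2]
        rw [Finset.sum_congr rfl (fun k _ => hc1 k),
          Finset.sum_fiberwise_of_maps_to (fun v' _ => Finset.mem_univ _)]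
        have hc2 : ∀ v' ∈ Fj, g v' • w ((f v').2) =
            algebraMap Fq K (g v') * bb A (f v') := by
          intro v' hv'
          rw [Algebra.smul_def]
          congr 1
          simp only [hw, hbb, hfv1 v' hv']
        rw [Finset.sum_congr rfl hc2]
        exact hxz j hjJ
      have hG0 : G = 0 := hwli G hGsum
      have hsingle : G ((f v).2) = g v := by
        rw [hG']
        apply Finset.sum_eq_single_of_mem v
        · exact Finset.mem_filter.mpr ⟨Finset.mem_filter.mpr ⟨hvF, rfl⟩, rfl⟩
        · intro v' hv' hne
          exfalso
          apply hne
          apply hf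
          have hv'Fj : v' ∈ Fj := (Finset.mem_filter.mp hv').1
          have h1' : (f v').1 = (i, j) := hfv1 v' hv'Fj
          have h2' : (f v').2 = (f v).2 := (Finset.mem_filter.mp hv').2
          have h3' : (f v).1 = (i, j) := Prod.ext hvi rfl
          exact Prod.ext (h1'.trans h3'.symm) h2'
      rw [← hsingle, hG0]
      rfl
    show IsUnit ((M * BlockDiag Fq K A).submatrix id f).det
    have hsub : (M * BlockDiag Fq K A).submatrix id f =
        Matrix.of (fun u v : Fin h =>
          moo q (a ((fun v => (f v).1.1) v)) ((fun v => bb A (f v)) v) (u : ℕ)) := by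
      ext u v
      rw [Matrix.submatrix_apply, Matrix.of_apply, id]
      exact hMD A u (f v)
    rw [hsub]
    exact det_moo hq2 hfrob heps hroot a ha hconj (fun v => (f v).1.1)
      (fun v => bb A (f v)) hindep
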